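/- Let ρ be a positive semidefinite matrix on ℂ^d ⊗ ℂ^n (indexed by pairs (s,b) with s ∈ Fin d, b ∈ Fin n). Let {P_α}_{α∈A} be a finite family of Hermitian positive semidefinite d×d complex matrices whose real span is the space of all Hermitian d×d matrices, and let {Q_α}_{α∈A} be a dual frame for it. Then ρ admits the bath-positive decomposition ρ = Σ_α Q_α ⊗ η_α, where η_α := Tr_S[(P_α ⊗ 1_n) ρ], and each η_α is positive semidefinite. -/

import Mathlib

open Matrix
open scoped Kronecker ComplexOrder

/-- Partial trace over the first (system) factor. -/
noncomputable def trS {d n : ℕ} (M : Matrix (Fin d × Fin n) (Fin d × Fin n) ℂ) :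
    Matrix (Fin n) (Fin n) ℂ :=
  Matrix.of fun b b' => ∑ s : Fin d, M (s, b) (s, b')

lemma trS_posSemidef {d n : ℕ} {M : Matrix (Fin d × Fin n) (Fin d × Fin n) ℂ}
    (hM : M.PosSemidef) : (trS M).PosSemidef := by
  refine PosSemidef.of_dotProduct_mulVec_nonneg ?_ ?_
  · ext b b'
    simp only [trS, conjTranspose_apply, Matrix.of_apply, star_sum]
    refine Finset.sum_congr rfl fun s _ => ?_
    have := congrFun (congrFun hM.isHermitian (s, b)) (s, b')
    simpa [conjTranspose_apply] using this
  · intro x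
    set y : Fin d → Fin d × Fin n → ℂ :=
      fun s p => if p.1 = s then x p.2 else 0 with hy
    have hmv : ∀ (s : Fin d) (p : Fin d × Fin n),
        M.mulVec (y s) p = ∑ b' : Fin n, M p (s, b') * x b' := by
      intro s p
      simp only [mulVec, dotProduct, hy, Fintype.sum_prod_type, mul_ite, mul_zero]
      rw [Finset.sum_comm]
      simp [Finset.sum_ite_eq']
    have form : ∀ s : Fin d,
        star (y s) ⬝ᵥ M.mulVec (y s)
          = ∑ b : Fin n, ∑ b' : Fin n, star (x b) * (M (s, b) (s, b') * x b') := by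
      intro s
      simp only [dotProduct, hmv, Pi.star_apply, hy, Fintype.sum_prod_type,
        ite_mul, zero_mul, apply_ite (star : ℂ → ℂ), star_zero]
      rw [Finset.sum_comm]
      simp [Finset.sum_ite_eq', Finset.mul_sum]
      exact Finset.sum_congr rfl fun b _ => by
        have := hmv s (s, b)
        simp only [hy] at this
        rw [this, Finset.mul_sum]
    have key : star x ⬝ᵥ (trS M).mulVec x
        = ∑ s : Fin d, star (y s) ⬝ᵥ M.mulVec (y s) :=
      calc star x ⬝ᵥ (trS M).mulVec x
          = ∑ b : Fin n, ∑ b' : Fin n, ∑ s : Fin d,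
              star (x b) * (M (s, b) (s, b') * x b') := by
            simp only [dotProduct, mulVec, trS, Matrix.of_apply, Pi.star_apply,
              Finset.mul_sum, Finset.sum_mul]
            try exact Finset.sum_congr rfl fun b _ => Finset.sum_congr rfl fun b' _ =>
              Finset.sum_congr rfl fun s _ => by ring
        _ = ∑ b : Fin n, ∑ s : Fin d, ∑ b' : Fin n,
              star (x b) * (M (s, b) (s, b') * x b') :=
            Finset.sum_congr rfl fun b _ => Finset.sum_comm
        _ = ∑ s : Fin d, ∑ b : Fin n, ∑ b' : Fin n,
              star (x b) * (M (s, b) (s, b') * x b') := Finset.sum_comm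
        _ = ∑ s : Fin d, star (y s) ⬝ᵥ M.mulVec (y s) :=
            Finset.sum_congr rfl fun s _ => (form s).symm
    rw [key]
    exact Finset.sum_nonneg fun s _ => hM.dotProduct_mulVec_nonneg _

lemma trS_mul_comm {d n : ℕ} (A : Matrix (Fin d) (Fin d) ℂ)
    (M : Matrix (Fin d × Fin n) (Fin d × Fin n) ℂ) :
    trS ((A ⊗ₖ (1 : Matrix (Fin n) (Fin n) ℂ)) * M)
      = trS (M * (A ⊗ₖ (1 : Matrix (Fin n) (Fin n) ℂ))) := by
  ext b b'
  simp only [trS, Matrix.of_apply, Matrix.mul_apply, kroneckerMap_apply,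
    Fintype.sum_prod_type, Matrix.one_apply, mul_ite, mul_zero, mul_one,
    ite_mul, zero_mul, one_mul, Finset.sum_ite_eq, Finset.sum_ite_eq',
    Finset.mem_univ, if_true]
  rw [Finset.sum_comm]
  refine Finset.sum_congr rfl fun s _ => Finset.sum_congr rfl fun t _ => mul_comm _ _

theorem bath_positive_decomposition {d n : ℕ} {A : Type*} [Fintype A]
    (ρ : Matrix (Fin d × Fin n) (Fin d × Fin n) ℂ) (hρ : ρ.PosSemidef)
    (P Q : A → Matrix (Fin d) (Fin d) ℂ)
    (hPherm : ∀ α, (P α).IsHermitian)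
    (hPpos : ∀ α, (P α).PosSemidef)
    (hPspan : ∀ X : Matrix (Fin d) (Fin d) ℂ, X.IsHermitian →
      ∃ c : A → ℝ, X = ∑ α, (c α : ℂ) • P α)
    (hQherm : ∀ α, (Q α).IsHermitian)
    (hdual : ∀ X : Matrix (Fin d) (Fin d) ℂ,
      X = ∑ α, (Matrix.trace (X * Q α)) • P α ∧
      X = ∑ α, (Matrix.trace (X * P α)) • Q α) :
    ρ = ∑ α, (Q α) ⊗ₖ (trS ((P α ⊗ₖ (1 : Matrix (Fin n) (Fin n) ℂ)) * ρ)) ∧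
    ∀ α, (trS ((P α ⊗ₖ (1 : Matrix (Fin n) (Fin n) ℂ)) * ρ)).PosSemidef := by
  constructor
  · ext ⟨s, b⟩ ⟨s', b'⟩
    have h := (hdual (Matrix.of fun u v => ρ ((u, b)) ((v, b')))).2
    have h2 := congrFun (congrFun h s) s'
    simp only [Matrix.of_apply, Matrix.sum_apply, Matrix.smul_apply, smul_eq_mul] at h2
    rw [h2, Matrix.sum_apply]
    refine Finset.sum_congr rfl fun α _ => ?_
    simp only [kroneckerMap_apply]
    rw [mul_comm]
    congr 1
    -- η α b b' = trace (M * P α)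
    simp only [trS, Matrix.of_apply, Matrix.trace, Matrix.diag_apply, Matrix.mul_apply,
      kroneckerMap_apply, Fintype.sum_prod_type, Matrix.one_apply, mul_ite, mul_zero,
      mul_one, ite_mul, zero_mul, Finset.sum_ite_eq, Finset.sum_ite_eq',
      Finset.mem_univ, if_true]
    rw [Finset.sum_comm]
    refine Finset.sum_congr rfl fun t _ => Finset.sum_congr rfl fun u _ => mul_comm _ _
  · intro α
    obtain ⟨B, hsq, hB⟩ : ∃ B : Matrix (Fin d) (Fin d) ℂ, B.PosSemidef ∧ B * B = P α := by
      open scoped MatrixOrder in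
      exact ⟨CFC.sqrt (P α), (CFC.sqrt_nonneg (P α)).posSemidef,
        CFC.sqrt_mul_sqrt_self (P α) (hPpos α).nonneg⟩
    have hBH : (B ⊗ₖ (1 : Matrix (Fin n) (Fin n) ℂ))ᴴ
        = B ⊗ₖ (1 : Matrix (Fin n) (Fin n) ℂ) := by
      ext ⟨s, b⟩ ⟨s', b'⟩
      simp only [conjTranspose_apply, kroneckerMap_apply, star_mul', Matrix.one_apply,
        apply_ite (star : ℂ → ℂ), star_zero, star_one]
      rw [← conjTranspose_apply B, hsq.isHermitian]
      simp [eq_comm, mul_comm]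
    have key : trS ((P α ⊗ₖ (1 : Matrix (Fin n) (Fin n) ℂ)) * ρ)
        = trS ((B ⊗ₖ (1 : Matrix (Fin n) (Fin n) ℂ)) * ρ *
            (B ⊗ₖ (1 : Matrix (Fin n) (Fin n) ℂ))ᴴ) := by
      rw [hBH, ← trS_mul_comm B ((B ⊗ₖ (1 : Matrix (Fin n) (Fin n) ℂ)) * ρ),
        ← Matrix.mul_assoc, ← Matrix.mul_kronecker_mul, hB, Matrix.one_mul]
    rw [key]
    exact trS_posSemidef (hρ.mul_mul_conjTranspose_same _)
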